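/- Let D ⊆ ℂ^N be a convex domain that contains a complex affine line. Then for every boundary point p ∈ ∂D there exists a complex affine line through p entirely contained in ∂D. Equivalently (contrapositive): if there exists p ∈ ∂D such that no complex affine line through p is contained in ∂D, then D contains no complex affine line, and hence D is biholomorphic to a bounded domain. -/

import Mathlib

/-- A convex domain in `ℂ^N`: a nonempty open convex subset. -/
def IsConvexDomain {N : ℕ} (D : Set (Fin N → ℂ)) : Prop :=
  IsOpen D ∧ Convex ℝ D ∧ D.Nonempty

/-- `S` contains a complex affine line `{p + ζ • v : ζ ∈ ℂ}` with `v ≠ 0`. -/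
def ContainsComplexLine {E : Type*} [AddCommGroup E] [Module ℂ E] (S : Set E) : Prop :=
  ∃ p v : E, v ≠ 0 ∧ ∀ ζ : ℂ, p + ζ • v ∈ S

/-- `D` is biholomorphic to a bounded domain in `ℂ^N`. -/
def BiholToBounded {N : ℕ} (D : Set (Fin N → ℂ)) : Prop :=
  ∃ (U : Set (Fin N → ℂ)) (F G : (Fin N → ℂ) → (Fin N → ℂ)),
    IsOpen U ∧ U.Nonempty ∧ Bornology.IsBounded U ∧
    DifferentiableOn ℂ F D ∧ F '' D = U ∧
    DifferentiableOn ℂ G U ∧ (∀ z ∈ D, G (F z) = z) ∧ (∀ w ∈ U, F (G w) = w)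

open Set Complex Submodule

namespace ConvexDomainAux

lemma real_smul_eq {N : ℕ} (r : ℝ) (w : Fin N → ℂ) : r • w = (r : ℂ) • w :=
  (IsScalarTower.algebraMap_smul ℂ r w).symm

/-- If an open convex set contains the full complex line `p₀ + ℂ v`, then it is invariant
under translations by complex multiples of `v`. -/
lemma line_absorb {N : ℕ} {D : Set (Fin N → ℂ)} (hop : IsOpen D) (hconv : Convex ℝ D)
    {p₀ v : Fin N → ℂ} (hline : ∀ ζ : ℂ, p₀ + ζ • v ∈ D) :
    ∀ x ∈ D, ∀ ζ : ℂ, x + ζ • v ∈ D := by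
  intro x hx ζ
  have hcont : Continuous (fun s : ℝ => x + s • (x - p₀)) := by continuity
  have h0 : (fun s : ℝ => x + s • (x - p₀)) 0 ∈ D := by simpa using hx
  have : ∀ᶠ s in nhds (0:ℝ), x + s • (x - p₀) ∈ D := by
    have := hcont.continuousAt (x := (0:ℝ)) |>.preimage_mem_nhds (hop.mem_nhds h0)
    exact this
  obtain ⟨s, hs, hsD⟩ : ∃ s : ℝ, 0 < s ∧ x + s • (x - p₀) ∈ D := by
    rcases Metric.eventually_nhds_iff.mp this with ⟨ε, hε, hball⟩
    refine ⟨ε/2, by positivity, hball ?_⟩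
    rw [Real.dist_eq, sub_zero, abs_of_pos (half_pos hε)]
    linarith [half_lt_self hε]
  set t : ℝ := s / (1 + s) with ht
  have h1s : (0:ℝ) < 1 + s := by linarith
  have ht0 : 0 < t := by positivity
  have ht1 : t < 1 := by rw [ht, div_lt_one h1s]; linarith
  have r1 : (1 - t) * (1 + s) = (1:ℝ) := by rw [ht]; field_simp; ring
  have r2 : t = (1 - t) * s := by rw [ht]; field_simp; ring
  clear_value t
  have key : x + ζ • v = (1 - t) • (x + s • (x - p₀)) + t • (p₀ + ((t:ℂ)⁻¹ * ζ) • v) := by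
    rw [real_smul_eq, real_smul_eq, real_smul_eq]
    have htc : ((t:ℂ)) ≠ 0 := by exact_mod_cast ht0.ne'
    have h1 : ((1:ℂ) - t) * (1 + s) = 1 := by exact_mod_cast r1
    have h2 : ((t:ℂ)) = (1 - (t:ℂ)) * s := by exact_mod_cast r2
    match_scalars
    · linear_combination -h1
    · field_simp
    · linear_combination -h2
  rw [key]
  exact hconv hsD (hline _) (by linarith) ht0.le (by ring)

/-- If `D` contains a complex line with direction `v`, then the frontier of `D` is invariant
under translations by complex multiples of `v`. -/
lemma line_frontier {N : ℕ} {D : Set (Fin N → ℂ)} (hop : IsOpen D) (hconv : Convex ℝ D)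
    {p₀ v : Fin N → ℂ} (hline : ∀ ζ : ℂ, p₀ + ζ • v ∈ D) :
    ∀ p ∈ frontier D, ∀ ζ : ℂ, p + ζ • v ∈ frontier D := by
  intro p hp ζ
  have hpcl : p ∈ closure D := frontier_subset_closure hp
  have hpnD : p ∉ D := fun h => ((hop.frontier_eq ▸ hp).2) h
  rw [hop.frontier_eq]
  constructor
  · have hsub : closure D ⊆ (fun z => z + ζ • v) ⁻¹' closure D := by
      apply closure_minimal
      · intro z hz
        exact subset_closure (line_absorb hop hconv hline z hz ζ)
      · exact IsClosed.preimage (by continuity) isClosed_closure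
    exact hsub hpcl
  · intro h
    apply hpnD
    have hmem := line_absorb hop hconv hline _ h (-ζ)
    have heq : p + ζ • v + (-ζ) • v = p := by
      rw [add_assoc, ← add_smul]
      simp
    rwa [heq] at hmem

/-- Separation: if `D` contains no complex line, then every direction is detected by a
complex-linear functional whose real part is bounded above on `D`. -/
lemma sep_functional {N : ℕ} {D : Set (Fin N → ℂ)} (hop : IsOpen D) (hconv : Convex ℝ D)
    (hne : D.Nonempty) (hnl : ¬ ContainsComplexLine D) :
    ∀ v : Fin N → ℂ, v ≠ 0 →
      ∃ (f : (Fin N → ℂ) →ₗ[ℂ] ℂ) (c : ℝ), (∀ z ∈ D, (f z).re < c) ∧ f v ≠ 0 := by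
  by_contra hcon
  push_neg at hcon
  obtain ⟨v, hv, hker⟩ := hcon
  obtain ⟨p, hp⟩ := hne
  apply hnl
  refine ⟨p, v, hv, fun ζ => ?_⟩
  by_contra hout
  obtain ⟨g, hg⟩ := geometric_hahn_banach_open_point hconv hop hout
  set f : (Fin N → ℂ) →ₗ[ℂ] ℂ := LinearMap.extendTo𝕜' (𝕜 := ℂ) (g : (Fin N → ℂ) →ₗ[ℝ] ℝ) with hf
  have hre : ∀ x, (f x).re = g x := by
    intro x
    have h := LinearMap.extendTo𝕜'_apply_re (𝕜 := ℂ) (g : (Fin N → ℂ) →ₗ[ℝ] ℝ) x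
    simp only [RCLike.re_to_complex] at h
    exact h
  have hfv : f v = 0 := hker f (g (p + ζ • v)) (fun z hz => by rw [hre]; exact hg z hz)
  have hcalc : f (p + ζ • v) = f p := by
    rw [map_add, map_smul, hfv, smul_zero, add_zero]
  have h1 : g (p + ζ • v) = g p := by
    rw [← hre, ← hre, hcalc]
  have h2 : g p < g (p + ζ • v) := hg p hp
  linarith [h1 ▸ h2]

/-- Out of the separating functionals one can select `N` of them forming a
`ℂ`-linearly independent family. -/
lemma select_functionals {N : ℕ} {D : Set (Fin N → ℂ)}
    (hsep : ∀ v : Fin N → ℂ, v ≠ 0 →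
      ∃ (f : (Fin N → ℂ) →ₗ[ℂ] ℂ) (c : ℝ), (∀ z ∈ D, (f z).re < c) ∧ f v ≠ 0) :
    ∃ f : Fin N → ((Fin N → ℂ) →ₗ[ℂ] ℂ), ∃ c : Fin N → ℝ,
      (∀ j, ∀ z ∈ D, ((f j) z).re < c j) ∧ Function.Injective (LinearMap.pi f) := by
  classical
  set C : Set (Module.Dual ℂ (Fin N → ℂ)) := {f | ∃ c : ℝ, ∀ z ∈ D, (f z).re < c} with hC
  have hCtop : span ℂ C = ⊤ := by
    by_contra hne
    have hcoann : (span ℂ C).dualCoannihilator ≠ ⊥ := by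
      intro hbot
      apply hne
      apply Submodule.eq_top_of_finrank_eq
      have h2 := Subspace.finrank_add_finrank_dualCoannihilator_eq (span ℂ C)
      rw [hbot, finrank_bot, add_zero] at h2
      rw [h2, Subspace.dual_finrank_eq]
    obtain ⟨v, hvmem, hv⟩ := Submodule.ne_bot_iff _ |>.mp hcoann
    obtain ⟨f, c, hfc, hfv⟩ := hsep v hv
    exact hfv ((Submodule.mem_dualCoannihilator v).mp hvmem f (subset_span ⟨c, hfc⟩))
  obtain ⟨b, hbC, hbspan, hbli⟩ := exists_linearIndependent ℂ C
  rw [hCtop] at hbspan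
  have hbs : ⊤ ≤ span ℂ (Set.range ((↑) : b → Module.Dual ℂ (Fin N → ℂ))) := by
    rw [Subtype.range_coe, hbspan]
  let bas : Module.Basis b ℂ (Module.Dual ℂ (Fin N → ℂ)) := Module.Basis.mk hbli hbs
  haveI : Fintype b := FiniteDimensional.fintypeBasisIndex bas
  have hcard : Fintype.card b = N := by
    rw [← Module.finrank_eq_card_basis bas, Subspace.dual_finrank_eq, Module.finrank_fin_fun]
  let e : Fin N ≃ b := (Fintype.equivFinOfCardEq hcard).symm
  refine ⟨fun j => (e j : Module.Dual ℂ (Fin N → ℂ)), fun j => Classical.choose (hbC (e j).2),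
    ?_, ?_⟩
  · intro j
    exact Classical.choose_spec (hbC (e j).2)
  · rw [← LinearMap.ker_eq_bot, eq_bot_iff]
    intro z hz
    simp only [LinearMap.mem_ker] at hz
    have hall : ∀ φ : Module.Dual ℂ (Fin N → ℂ), φ z = 0 := by
      intro φ
      have hφ : φ ∈ span ℂ b := by rw [hbspan]; exact mem_top
      induction hφ using Submodule.span_induction with
      | mem g hg =>
          obtain ⟨i, hi⟩ := e.surjective ⟨g, hg⟩
          have h3 := congrFun hz i
          simp only [LinearMap.pi_apply] at h3
          rw [hi] at h3
          exact h3
      | zero => simp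
      | add g h _ _ hg hh => simp [hg, hh]
      | smul a g _ hg => simp [hg]
    simpa using (Module.forall_dual_apply_eq_zero_iff ℂ z).mp hall

/-- The explicit biholomorphism onto a bounded domain, built from `N` independent
functionals whose real parts are bounded above on `D`. -/
lemma bihol_construction {N : ℕ} {D : Set (Fin N → ℂ)} (hop : IsOpen D) (hne : D.Nonempty)
    (f : Fin N → ((Fin N → ℂ) →ₗ[ℂ] ℂ)) (c : Fin N → ℝ)
    (hfc : ∀ j, ∀ z ∈ D, ((f j) z).re < c j)
    (hinj : Function.Injective (LinearMap.pi f)) : BiholToBounded D := by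
  classical
  set L : (Fin N → ℂ) →ₗ[ℂ] (Fin N → ℂ) := LinearMap.pi f with hL
  have hsurj : Function.Surjective L := LinearMap.injective_iff_surjective.mp hinj
  let Leq : (Fin N → ℂ) ≃ₗ[ℂ] (Fin N → ℂ) := LinearEquiv.ofBijective L ⟨hinj, hsurj⟩
  set F : (Fin N → ℂ) → (Fin N → ℂ) := fun z j => (f j z - (c j + 1 : ℝ))⁻¹ with hF
  set G : (Fin N → ℂ) → (Fin N → ℂ) :=
    fun w => Leq.symm (fun j => (w j)⁻¹ + (c j + 1 : ℝ)) with hG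
  have hden : ∀ z ∈ D, ∀ j, f j z - (c j + 1 : ℝ) ≠ 0 := by
    intro z hz j h0
    have hre : (f j z - (c j + 1 : ℝ)).re = (f j z).re - (c j + 1) := by
      simp [Complex.sub_re]
    rw [h0] at hre
    have := hfc j z hz
    simp at hre
    linarith
  have hGF : ∀ z ∈ D, G (F z) = z := by
    intro z hz
    have h1 : (fun j => ((F z) j)⁻¹ + ((c j + 1 : ℝ) : ℂ)) = L z := by
      funext j
      rw [hF]
      simp only [inv_inv]
      rw [sub_add_cancel]
      rfl
    rw [hG]
    simp only [h1]
    exact Leq.symm_apply_apply z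
  have hFnz : ∀ z ∈ D, ∀ j, F z j ≠ 0 := by
    intro z hz j
    exact inv_ne_zero (hden z hz j)
  have hFG : ∀ w, (∀ j, w j ≠ 0) →
      (fun j => (f j) (G w) - ((c j + 1 : ℝ) : ℂ)) = fun j => (w j)⁻¹ := by
    intro w hw
    funext j
    have h1 : (f j) (G w) = L (G w) j := rfl
    have h2 : L (G w) = fun j => (w j)⁻¹ + ((c j + 1 : ℝ) : ℂ) := by
      rw [hG]
      exact Leq.apply_symm_apply _
    rw [h1, h2]
    ring
  have hFGw : ∀ w, (∀ j, w j ≠ 0) → F (G w) = w := by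
    intro w hw
    funext j
    rw [hF]
    simp only
    rw [congrFun (hFG w hw) j, inv_inv]
  have hUchar : F '' D = {w | (∀ j, w j ≠ 0) ∧ G w ∈ D} := by
    ext w
    constructor
    · rintro ⟨z, hz, rfl⟩
      exact ⟨hFnz z hz, by rw [hGF z hz]; exact hz⟩
    · rintro ⟨hw, hGw⟩
      exact ⟨G w, hGw, hFGw w hw⟩
  have hWopen : IsOpen {w : Fin N → ℂ | ∀ j, w j ≠ 0} := by
    have : {w : Fin N → ℂ | ∀ j, w j ≠ 0} = ⋂ j, (fun w : Fin N → ℂ => w j) ⁻¹' {(0:ℂ)}ᶜ := by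
      ext w; simp
    rw [this]
    exact isOpen_iInter_of_finite fun j =>
      (continuous_apply j).isOpen_preimage _ isOpen_compl_singleton
  have hGcont : ContinuousOn G {w : Fin N → ℂ | ∀ j, w j ≠ 0} := by
    have hlin : Continuous (Leq.symm : (Fin N → ℂ) →ₗ[ℂ] (Fin N → ℂ)) :=
      LinearMap.continuous_of_finiteDimensional _
    apply hlin.comp_continuousOn
    apply continuousOn_pi.mpr
    intro j
    exact (((continuous_apply j).continuousOn).inv₀
      (fun w (hw : ∀ j, w j ≠ 0) => hw j)).add continuousOn_const
  have hUopen : IsOpen (F '' D) := by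
    rw [hUchar]
    have : {w | (∀ j, w j ≠ 0) ∧ G w ∈ D} = {w : Fin N → ℂ | ∀ j, w j ≠ 0} ∩ G ⁻¹' D := rfl
    rw [this]
    exact hGcont.isOpen_inter_preimage hWopen hop
  have hUbdd : Bornology.IsBounded (F '' D) := by
    apply (Metric.isBounded_closedBall (x := (0 : Fin N → ℂ)) (r := 1)).subset
    rintro w ⟨z, hz, rfl⟩
    rw [Metric.mem_closedBall, dist_zero_right]
    apply pi_norm_le_iff_of_nonneg zero_le_one |>.mpr
    intro j
    rw [hF]
    simp only [norm_inv]
    have h1 : (1:ℝ) ≤ ‖f j z - ((c j + 1 : ℝ) : ℂ)‖ := by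
      have h2 : |(f j z - ((c j + 1 : ℝ) : ℂ)).re| ≤ ‖f j z - ((c j + 1 : ℝ) : ℂ)‖ := by
        exact Complex.abs_re_le_norm _
      have h3 : (f j z - ((c j + 1 : ℝ) : ℂ)).re = (f j z).re - (c j + 1) := by
        simp [Complex.sub_re]
      have h4 := hfc j z hz
      rw [h3] at h2
      rw [abs_sub_comm] at h2
      calc (1:ℝ) ≤ |c j + 1 - (f j z).re| := by rw [abs_of_pos (by linarith)]; linarith
        _ ≤ _ := h2
    calc ‖f j z - ((c j + 1 : ℝ) : ℂ)‖⁻¹ ≤ 1⁻¹ := inv_anti₀ one_pos h1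
      _ = 1 := inv_one
  have hFdiff : DifferentiableOn ℂ F D := by
    apply differentiableOn_pi.mpr
    intro j
    apply DifferentiableOn.inv
    · apply DifferentiableOn.sub_const
      exact ((f j).toContinuousLinearMap.differentiable).differentiableOn
    · exact fun z hz => hden z hz j
  have hGdiff : DifferentiableOn ℂ G (F '' D) := by
    have hlin : Differentiable ℂ (Leq.symm : (Fin N → ℂ) →ₗ[ℂ] (Fin N → ℂ)) :=
      (Leq.symm : (Fin N → ℂ) →ₗ[ℂ] (Fin N → ℂ)).toContinuousLinearMap.differentiable
    apply hlin.comp_differentiableOn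
    apply differentiableOn_pi.mpr
    intro j
    apply DifferentiableOn.add_const
    apply DifferentiableOn.inv
    · exact ((ContinuousLinearMap.proj (R := ℂ) (φ := fun _ : Fin N => ℂ)
        j).differentiable).differentiableOn
    · intro w hw
      rw [hUchar] at hw
      exact hw.1 j
  exact ⟨F '' D, F, G, hUopen, hne.image F, hUbdd, hFdiff, rfl, hGdiff,
    hGF, fun w hw => by rw [hUchar] at hw; exact hFGw w hw.1⟩

end ConvexDomainAux

/-- geometric content of Corollary 4.1: if a convex domain `D ⊆ ℂ^N`
contains a complex affine line, then through every boundary point of `D` there passes a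
complex affine line entirely contained in `∂D`. Contrapositively: if some `p ∈ ∂D` has
no complex affine line through it contained in `∂D`, then `D` contains no complex affine
line, and hence `D` is biholomorphic to a bounded domain. -/
theorem line_through_every_boundary_point {N : ℕ} (D : Set (Fin N → ℂ))
    (hD : IsConvexDomain D) :
    (ContainsComplexLine D →
      ∀ p ∈ frontier D, ∃ v : Fin N → ℂ, v ≠ 0 ∧ ∀ ζ : ℂ, p + ζ • v ∈ frontier D) ∧
    ((∃ p ∈ frontier D, ¬ ∃ v : Fin N → ℂ, v ≠ 0 ∧ ∀ ζ : ℂ, p + ζ • v ∈ frontier D) →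
      ¬ ContainsComplexLine D ∧ BiholToBounded D) := by
  obtain ⟨hop, hconv, hne⟩ := hD
  have part1 : ContainsComplexLine D →
      ∀ p ∈ frontier D, ∃ v : Fin N → ℂ, v ≠ 0 ∧ ∀ ζ : ℂ, p + ζ • v ∈ frontier D := by
    rintro ⟨p₀, v, hv, hline⟩ p hp
    exact ⟨v, hv, fun ζ => ConvexDomainAux.line_frontier hop hconv hline p hp ζ⟩
  refine ⟨part1, ?_⟩
  rintro ⟨p, hp, hnl⟩
  have hnc : ¬ ContainsComplexLine D := fun h => hnl (part1 h p hp)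
  refine ⟨hnc, ?_⟩
  obtain ⟨f, c, hfc, hinj⟩ :=
    ConvexDomainAux.select_functionals
      (ConvexDomainAux.sep_functional hop hconv hne hnc)
  exact ConvexDomainAux.bihol_construction hop hne f c hfc hinj
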